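/- The formal power series 1/(1 - (D - 2)t + t²) over the rationals has all coefficients nonnegative if and only if D ≥ 4, where D is an integer. -/

import Mathlib

/-- For an integer `D`, the formal power series `1/(1 - (D-2)t + t²)` over
`ℚ` (encoded as the power series `g` satisfying `g * (1 - (D-2) t + t²) = 1`) has all
coefficients nonnegative if and only if `D ≥ 4`. -/
theorem powerSeries_nonneg_coeffs_iff_four_le
    (D : ℤ) (g : PowerSeries ℚ)
    (hg : g * (1 - PowerSeries.C ((D : ℚ) - 2) * PowerSeries.X + PowerSeries.X ^ 2)
        = 1) :
    (∀ n : ℕ, 0 ≤ PowerSeries.coeff n g) ↔ 4 ≤ D := by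
  set a : ℚ := (D : ℚ) - 2 with ha
  have hexp : g * (1 - PowerSeries.C a * PowerSeries.X + PowerSeries.X ^ 2)
      = g - PowerSeries.C a * (g * PowerSeries.X) + g * PowerSeries.X ^ 2 := by
    ring
  rw [hexp] at hg
  have h0 : PowerSeries.coeff 0 g = 1 := by
    have := congrArg (PowerSeries.coeff 0) hg
    simpa using this
  have h1 : PowerSeries.coeff 1 g = a := by
    have := congrArg (PowerSeries.coeff 1) hg
    have h2 : PowerSeries.coeff 1 (g * PowerSeries.X ^ 2) = 0 := by
      rw [PowerSeries.coeff_mul_X_pow']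
      simp
    simp only [map_add, map_sub, PowerSeries.coeff_C_mul,
      PowerSeries.coeff_succ_mul_X, PowerSeries.coeff_one, h2, h0,
      if_neg (one_ne_zero)] at this
    linarith
  have hrec : ∀ n : ℕ, PowerSeries.coeff (n + 2) g
      = a * PowerSeries.coeff (n + 1) g - PowerSeries.coeff n g := by
    intro n
    have := congrArg (PowerSeries.coeff (n + 2)) hg
    have h2 : PowerSeries.coeff (n + 2) (g * PowerSeries.X ^ 2)
        = PowerSeries.coeff n g := PowerSeries.coeff_mul_X_pow g 2 n
    simp only [map_add, map_sub, PowerSeries.coeff_C_mul,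
      PowerSeries.coeff_succ_mul_X, PowerSeries.coeff_one, h2,
      if_neg (Nat.succ_ne_zero (n + 1))] at this
    linarith
  constructor
  · intro h
    by_contra hD
    push_neg at hD
    have hD' : (D : ℚ) ≤ 3 := by exact_mod_cast (by omega : D ≤ 3)
    have ha1 : 0 ≤ a := h1 ▸ h 1
    have hc2 : PowerSeries.coeff 2 g = a * a - 1 := by
      have := hrec 0
      rw [h1, h0] at this
      exact this
    have hc3 : PowerSeries.coeff 3 g = a * (a * a - 1) - a := by
      have := hrec 1
      rw [hc2, h1] at this
      exact this
    have h2 := h 2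
    have h3 := h 3
    rw [hc2] at h2
    rw [hc3] at h3
    have hle : a ≤ 1 := by rw [ha]; linarith
    nlinarith
  · intro hD
    have hD' : (4 : ℚ) ≤ (D : ℚ) := by exact_mod_cast hD
    have ha2 : 2 ≤ a := by rw [ha]; linarith
    have key : ∀ n, 0 ≤ PowerSeries.coeff n g ∧
        PowerSeries.coeff n g ≤ PowerSeries.coeff (n + 1) g := by
      intro n
      induction n with
      | zero =>
        constructor
        · rw [h0]; norm_num
        · rw [h0, h1]; linarith
      | succ k ih =>
        obtain ⟨hk0, hk1⟩ := ih
        have hk2 : 0 ≤ PowerSeries.coeff (k + 1) g := le_trans hk0 hk1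
        refine ⟨hk2, ?_⟩
        rw [hrec k]
        nlinarith
    exact fun n => (key n).1
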